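/- Define ADV(f) for a function f : S → Σ with S ⊆ {0,1}^n as the maximum over nonzero symmetric entrywise-nonnegative S×S matrices Γ with Γ_{xy} = 0 whenever f(x) = f(y), of ‖Γ‖ / max_i ‖Γ ∘ D_i‖, where (D_i)_{xy} = 1 iff x_i ≠ y_i. For the direct sum function f^(t) : S^t → Σ^t defined by f^(t)(x^1,…,x^t) = (f(x^1),…,f(x^t)), we have ADV(f^(t)) ≥ t · ADV(f). -/

import Mathlib

open Matrix

noncomputable def specNorm {n : Type*} [Fintype n] [DecidableEq n] (M : Matrix n n ℝ) : ℝ :=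
  ‖Matrix.toEuclideanCLM (𝕜 := ℝ) M‖

/-- The difference matrix for coordinate `i`: `(Dᵢ)_{xy} = 1` iff the inputs of `x` and `y`
differ in coordinate `i`. -/
def diffMatrix {V ι : Type*} (inp : V → ι → Bool) (i : ι) : Matrix V V ℝ :=
  Matrix.of fun x y => if inp x i ≠ inp y i then (1 : ℝ) else 0

/-- The (nonnegative-weight) adversary bound of `f`, where each element `x` of the domain `V`
has input string `inp x`. -/
noncomputable def ADV {V ι σ : Type*} [Fintype V] [DecidableEq V] [Fintype ι]
    (inp : V → ι → Bool) (f : V → σ) : ℝ :=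
  sSup { r : ℝ | ∃ Γ : Matrix V V ℝ, Γ ≠ 0 ∧ Γ.IsSymm ∧ (∀ x y, 0 ≤ Γ x y) ∧
    (∀ x y, f x = f y → Γ x y = 0) ∧
    r = specNorm Γ / ⨆ i : ι, specNorm (Γ ⊙ diffMatrix inp i) }

set_option linter.unusedSectionVars false
set_option maxHeartbeats 1000000
open scoped RealInnerProductSpace

section basic
variable {V : Type*} [Fintype V] [DecidableEq V]

lemma norm_wlp (v : V → ℝ) :
    ‖(WithLp.equiv 2 (V → ℝ)).symm v‖ = Real.sqrt (∑ x, v x ^ 2) := by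
  rw [EuclideanSpace.norm_eq]
  congr 1
  refine Finset.sum_congr rfl fun x _ => ?_
  simp [Real.norm_eq_abs, sq_abs]

lemma specNorm_nonneg (M : Matrix V V ℝ) : 0 ≤ specNorm M := norm_nonneg _

lemma sqrt_mulVec_le (M : Matrix V V ℝ) (v : V → ℝ) :
    Real.sqrt (∑ x, (M *ᵥ v) x ^ 2) ≤ specNorm M * Real.sqrt (∑ x, v x ^ 2) := by
  have h := (Matrix.toEuclideanCLM (𝕜 := ℝ) M).le_opNorm ((WithLp.equiv 2 (V → ℝ)).symm v)
  rwa [show (WithLp.equiv 2 (V → ℝ)).symm v = WithLp.toLp 2 v from rfl,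
    Matrix.toEuclideanCLM_toLp, ← show (WithLp.equiv 2 (V → ℝ)).symm v = WithLp.toLp 2 v from rfl,
    ← show (WithLp.equiv 2 (V → ℝ)).symm (M *ᵥ v) = WithLp.toLp 2 (M *ᵥ v) from rfl,
    norm_wlp, norm_wlp] at h

lemma specNorm_le_bound (M : Matrix V V ℝ) (c : ℝ) (hc : 0 ≤ c)
    (h : ∀ v : V → ℝ, Real.sqrt (∑ x, (M *ᵥ v) x ^ 2) ≤ c * Real.sqrt (∑ x, v x ^ 2)) :
    specNorm M ≤ c := by
  apply ContinuousLinearMap.opNorm_le_bound _ hc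
  intro x
  have hx : x = (WithLp.equiv 2 (V → ℝ)).symm (WithLp.equiv 2 (V → ℝ) x) := by simp
  rw [hx, norm_wlp]
  exact (norm_wlp _).le.trans' (le_of_eq rfl) |>.trans (h _)

lemma sq_mulVec_le (M : Matrix V V ℝ) (v : V → ℝ) :
    ∑ x, (M *ᵥ v) x ^ 2 ≤ specNorm M ^ 2 * ∑ x, v x ^ 2 := by
  have h := sqrt_mulVec_le M v
  have h1 : (0:ℝ) ≤ ∑ x, (M *ᵥ v) x ^ 2 := Finset.sum_nonneg fun x _ => sq_nonneg _
  have h2 : (0:ℝ) ≤ ∑ x, v x ^ 2 := Finset.sum_nonneg fun x _ => sq_nonneg _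
  calc ∑ x, (M *ᵥ v) x ^ 2 = Real.sqrt (∑ x, (M *ᵥ v) x ^ 2) ^ 2 := (Real.sq_sqrt h1).symm
    _ ≤ (specNorm M * Real.sqrt (∑ x, v x ^ 2)) ^ 2 := by
        apply pow_le_pow_left₀ (Real.sqrt_nonneg _) h
    _ = specNorm M ^ 2 * ∑ x, v x ^ 2 := by
        rw [mul_pow, Real.sq_sqrt h2]

lemma specNorm_le_bound_sq (M : Matrix V V ℝ) (c : ℝ) (hc : 0 ≤ c)
    (h : ∀ v : V → ℝ, ∑ x, (M *ᵥ v) x ^ 2 ≤ c ^ 2 * ∑ x, v x ^ 2) :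
    specNorm M ≤ c := by
  apply specNorm_le_bound M c hc
  intro v
  calc Real.sqrt (∑ x, (M *ᵥ v) x ^ 2) ≤ Real.sqrt (c ^ 2 * ∑ x, v x ^ 2) :=
        Real.sqrt_le_sqrt (h v)
    _ = c * Real.sqrt (∑ x, v x ^ 2) := by
        rw [Real.sqrt_mul (sq_nonneg c), Real.sqrt_sq hc]

lemma abs_dot_mulVec_le (M : Matrix V V ℝ) (u v : V → ℝ) :
    |u ⬝ᵥ (M *ᵥ v)| ≤ specNorm M * (Real.sqrt (∑ x, u x ^ 2) * Real.sqrt (∑ x, v x ^ 2)) := by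
  have hcs : (u ⬝ᵥ (M *ᵥ v)) ^ 2 ≤ (∑ x, u x ^ 2) * ∑ x, (M *ᵥ v) x ^ 2 :=
    Finset.sum_mul_sq_le_sq_mul_sq _ _ _
  have h1 : |u ⬝ᵥ (M *ᵥ v)| ≤ Real.sqrt (∑ x, u x ^ 2) * Real.sqrt (∑ x, (M *ᵥ v) x ^ 2) := by
    rw [← Real.sqrt_sq_eq_abs, ← Real.sqrt_mul (Finset.sum_nonneg fun x _ => sq_nonneg _)]
    exact Real.sqrt_le_sqrt hcs
  refine h1.trans ?_
  calc Real.sqrt (∑ x, u x ^ 2) * Real.sqrt (∑ x, (M *ᵥ v) x ^ 2)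
      ≤ Real.sqrt (∑ x, u x ^ 2) * (specNorm M * Real.sqrt (∑ x, v x ^ 2)) := by
        exact mul_le_mul_of_nonneg_left (sqrt_mulVec_le M v) (Real.sqrt_nonneg _)
    _ = specNorm M * (Real.sqrt (∑ x, u x ^ 2) * Real.sqrt (∑ x, v x ^ 2)) := by ring

lemma abs_entry_le_specNorm (M : Matrix V V ℝ) (x y : V) : |M x y| ≤ specNorm M := by
  have h := abs_dot_mulVec_le M (Pi.single x 1) (Pi.single y 1)
  have hx : ∑ z, (Pi.single x 1 : V → ℝ) z ^ 2 = 1 := by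
    rw [Finset.sum_eq_single x] <;> simp +contextual [Pi.single_apply]
  have hy : ∑ z, (Pi.single y 1 : V → ℝ) z ^ 2 = 1 := by
    rw [Finset.sum_eq_single y] <;> simp +contextual [Pi.single_apply]
  have hd : (Pi.single x 1 : V → ℝ) ⬝ᵥ (M *ᵥ Pi.single y 1) = M x y := by
    simp [Matrix.mulVec_single, dotProduct, Pi.single_apply]
  rw [hd, hx, hy] at h
  simpa using h

lemma specNorm_mono {A B : Matrix V V ℝ} (h : ∀ x y, |A x y| ≤ B x y) :
    specNorm A ≤ specNorm B := by
  apply specNorm_le_bound_sq A _ (specNorm_nonneg B)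
  intro v
  have key : ∀ x, (A *ᵥ v) x ^ 2 ≤ (B *ᵥ (fun y => |v y|)) x ^ 2 := by
    intro x
    have h1 : |(A *ᵥ v) x| ≤ (B *ᵥ (fun y => |v y|)) x := by
      simp only [Matrix.mulVec, dotProduct]
      refine (Finset.abs_sum_le_sum_abs _ _).trans ?_
      refine Finset.sum_le_sum fun y _ => ?_
      rw [abs_mul]
      exact mul_le_mul_of_nonneg_right (h x y) (abs_nonneg _)
    calc (A *ᵥ v) x ^ 2 = |(A *ᵥ v) x| ^ 2 := (sq_abs _).symm
      _ ≤ (B *ᵥ (fun y => |v y|)) x ^ 2 := by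
          apply pow_le_pow_left₀ (abs_nonneg _) h1
  calc ∑ x, (A *ᵥ v) x ^ 2 ≤ ∑ x, (B *ᵥ (fun y => |v y|)) x ^ 2 :=
        Finset.sum_le_sum fun x _ => key x
    _ ≤ specNorm B ^ 2 * ∑ x, |v x| ^ 2 := sq_mulVec_le B _
    _ = specNorm B ^ 2 * ∑ x, v x ^ 2 := by simp [sq_abs]

lemma specNorm_sum_le {ι : Type*} (s : Finset ι) (A : ι → Matrix V V ℝ) :
    specNorm (∑ i ∈ s, A i) ≤ ∑ i ∈ s, specNorm (A i) := by
  unfold specNorm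
  rw [map_sum]
  exact norm_sum_le _ _

lemma specNorm_le_frobenius (A : Matrix V V ℝ) :
    specNorm A ≤ Real.sqrt (∑ x, ∑ y, A x y ^ 2) := by
  apply specNorm_le_bound_sq A _ (Real.sqrt_nonneg _)
  intro v
  have key : ∀ x, (A *ᵥ v) x ^ 2 ≤ (∑ y, A x y ^ 2) * ∑ y, v y ^ 2 := by
    intro x
    exact Finset.sum_mul_sq_le_sq_mul_sq _ _ _
  calc ∑ x, (A *ᵥ v) x ^ 2 ≤ ∑ x, ((∑ y, A x y ^ 2) * ∑ y, v y ^ 2) :=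
        Finset.sum_le_sum fun x _ => key x
    _ = (∑ x, ∑ y, A x y ^ 2) * ∑ y, v y ^ 2 := by rw [← Finset.sum_mul]
    _ = Real.sqrt (∑ x, ∑ y, A x y ^ 2) ^ 2 * ∑ y, v y ^ 2 := by
        rw [Real.sq_sqrt (show (0:ℝ) ≤ ∑ x, ∑ y, A x y ^ 2 from
          Finset.sum_nonneg fun x _ => Finset.sum_nonneg fun y _ => sq_nonneg _)]

end basic

section eig
variable {V : Type*} [Fintype V] [DecidableEq V]

lemma exists_unit_dot (A : Matrix V V ℝ) (hA : A.IsSymm) [Nonempty V] :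
    ∃ v : V → ℝ, (∑ x, v x ^ 2) = 1 ∧ specNorm A ≤ |v ⬝ᵥ (A *ᵥ v)| := by
  have hH : A.IsHermitian := by
    rwa [Matrix.IsHermitian, Matrix.conjTranspose_eq_transpose_of_trivial]
  set T := Matrix.toEuclideanCLM (𝕜 := ℝ) A with hT
  have hsa : _root_.IsSelfAdjoint T := by
    rw [_root_.IsSelfAdjoint, hT, ← map_star, Matrix.star_eq_conjTranspose, hH]
  have hadj : ∀ x y : EuclideanSpace ℝ V, ⟪T x, y⟫ = ⟪x, T y⟫ := by
    intro x y
    conv_lhs => rw [← ContinuousLinearMap.isSelfAdjoint_iff'.mp hsa]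
    exact ContinuousLinearMap.adjoint_inner_left T y x
  set b := hH.eigenvectorBasis with hb
  set μ := hH.eigenvalues with hμ
  have hTb : ∀ i, T (b i) = μ i • (b i) := by
    intro i
    apply (WithLp.equiv 2 (V → ℝ)).injective
    exact hH.mulVec_eigenvectorBasis i
  -- inner products as sums
  have hinner : ∀ x y : EuclideanSpace ℝ V, ⟪x, y⟫ = ∑ i, x i * y i := by
    intro x y
    rw [PiLp.inner_apply]
    simp [RCLike.inner_apply, mul_comm]
  -- norms squared via repr
  have hnorm_sq : ∀ y : EuclideanSpace ℝ V, ‖y‖ ^ 2 = ∑ i, (b.repr y) i ^ 2 := by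
    intro y
    rw [← b.repr.norm_map y, EuclideanSpace.norm_eq, Real.sq_sqrt (by positivity)]
    refine Finset.sum_congr rfl fun i _ => ?_
    simp [Real.norm_eq_abs, sq_abs]
  have hrepr : ∀ (y : EuclideanSpace ℝ V) i, b.repr (T y) i = μ i * b.repr y i := by
    intro y i
    rw [b.repr_apply_apply, b.repr_apply_apply, ← hadj, hTb i]
    rw [hinner, hinner]
    rw [Finset.mul_sum]
    refine Finset.sum_congr rfl fun x _ => ?_
    have : (μ i • b i) x = μ i * (b i) x := rfl
    rw [this]; ring
  obtain ⟨i0, hi0⟩ := Finite.exists_max (fun i => |μ i|)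
  have h1 : ‖b i0‖ = 1 := b.orthonormal.1 i0
  have h2 : ∑ x, ((b i0 : EuclideanSpace ℝ V) x) ^ 2 = 1 := by
    have h4 := h1
    rw [EuclideanSpace.norm_eq] at h4
    have h3 : ∑ x, ((b i0 : EuclideanSpace ℝ V) x) ^ 2 = ∑ x, ‖(b i0 : EuclideanSpace ℝ V) x‖ ^ 2 := by
      simp [Real.norm_eq_abs, sq_abs]
    rw [h3]
    exact Real.sqrt_eq_one.mp h4
  refine ⟨⇑(b i0), ?_, ?_⟩
  · exact h2
  · have hdot : (⇑(b i0) : V → ℝ) ⬝ᵥ (A *ᵥ ⇑(b i0)) = μ i0 := by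
      rw [hH.mulVec_eigenvectorBasis i0]
      rw [dotProduct_smul]
      have h2' : (⇑(b i0) : V → ℝ) ⬝ᵥ ⇑(b i0) = 1 := by
        rw [dotProduct]
        rw [← h2]
        exact Finset.sum_congr rfl fun x _ => (sq ((b i0 : EuclideanSpace ℝ V) x)).symm
      rw [smul_eq_mul, h2', mul_one]
    rw [hdot]
    -- show specNorm A ≤ |μ i0|
    apply specNorm_le_bound_sq A _ (abs_nonneg _)
    intro v
    set x : EuclideanSpace ℝ V := (WithLp.equiv 2 (V → ℝ)).symm v with hx
    have e1 : Real.sqrt (∑ z, (A *ᵥ v) z ^ 2) = ‖T x‖ := by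
      rw [hx, hT, ← norm_wlp]; rfl
    have e2 : ∑ z, (A *ᵥ v) z ^ 2 = ‖T x‖ ^ 2 := by
      rw [← e1, Real.sq_sqrt (Finset.sum_nonneg fun z _ => sq_nonneg _)]
    have e3 : ∑ z, v z ^ 2 = ‖x‖ ^ 2 := by
      rw [hx, ← Real.sq_sqrt (Finset.sum_nonneg fun z _ => sq_nonneg (v z)), ← norm_wlp]
    rw [e2, e3, hnorm_sq, hnorm_sq]
    calc ∑ i, b.repr (T x) i ^ 2 = ∑ i, (μ i * b.repr x i) ^ 2 := by
          refine Finset.sum_congr rfl fun i _ => by rw [hrepr]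
      _ ≤ ∑ i, |μ i0| ^ 2 * b.repr x i ^ 2 := by
          refine Finset.sum_le_sum fun i _ => ?_
          rw [mul_pow]
          have : μ i ^ 2 ≤ |μ i0| ^ 2 := by
            rw [← sq_abs (μ i)]
            exact pow_le_pow_left₀ (abs_nonneg _) (hi0 i) 2
          exact mul_le_mul_of_nonneg_right this (sq_nonneg _)
      _ = |μ i0| ^ 2 * ∑ i, b.repr x i ^ 2 := by rw [← Finset.mul_sum]

end eig

/-- Block-diagonal style matrix acting as `A` on coordinate `j`. -/
def blockM {V : Type*} [DecidableEq V] {t : ℕ} (A : Matrix V V ℝ) (j : Fin t) :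
    Matrix (Fin t → V) (Fin t → V) ℝ :=
  Matrix.of fun X Y => A (X j) (Y j) * ∏ k : {k : Fin t // k ≠ j}, (if X k.1 = Y k.1 then (1:ℝ) else 0)

section block
variable {V : Type*} [Fintype V] [DecidableEq V] {t : ℕ} (j : Fin t)

lemma splitAt_symm_same (b : V) (r : {k : Fin t // k ≠ j} → V) :
    (Equiv.funSplitAt j V).symm (b, r) j = b := by
  simp [Equiv.funSplitAt, Equiv.piSplitAt]

lemma splitAt_symm_ne (b : V) (r : {k : Fin t // k ≠ j} → V) (k : {k : Fin t // k ≠ j}) :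
    (Equiv.funSplitAt j V).symm (b, r) k.1 = r k := by
  simp only [Equiv.funSplitAt, Equiv.piSplitAt, Equiv.coe_fn_symm_mk]
  rw [dif_neg k.2]

lemma prod_split (h : Fin t → ℝ) :
    ∏ i, h i = h j * ∏ k : {k : Fin t // k ≠ j}, h k.1 := by
  rw [← Finset.mul_prod_erase Finset.univ h (Finset.mem_univ j)]
  congr 1
  rw [Finset.prod_subtype (p := fun k => k ≠ j) (Finset.univ.erase j)
    (fun x => by simp [Finset.mem_erase]) h]

lemma blockM_mulVec (A : Matrix V V ℝ) (w : (Fin t → V) → ℝ) (X : Fin t → V) :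
    (blockM A j *ᵥ w) X
      = ∑ b, A (X j) b * w ((Equiv.funSplitAt j V).symm (b, fun k => X k.1)) := by
  rw [Matrix.mulVec, dotProduct]
  rw [← Equiv.sum_comp (Equiv.funSplitAt j V).symm
    (fun Y => blockM A j X Y * w Y), Fintype.sum_prod_type]
  refine Finset.sum_congr rfl fun b _ => ?_
  have key : ∀ r : {k : Fin t // k ≠ j} → V,
      blockM A j X ((Equiv.funSplitAt j V).symm (b, r)) * w ((Equiv.funSplitAt j V).symm (b, r))
      = if (fun k : {k : Fin t // k ≠ j} => X k.1) = r
          then A (X j) b * w ((Equiv.funSplitAt j V).symm (b, r)) else 0 := by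
    intro r
    simp only [blockM, Matrix.of_apply]
    rw [splitAt_symm_same]
    have hprod : (∏ k : {k : Fin t // k ≠ j},
        (if X k.1 = (Equiv.funSplitAt j V).symm (b, r) k.1 then (1:ℝ) else 0))
        = if (fun k : {k : Fin t // k ≠ j} => X k.1) = r then (1:ℝ) else 0 := by
      simp only [splitAt_symm_ne]
      rw [Finset.prod_boole]
      congr 1
      simp [funext_iff]
    rw [hprod]
    by_cases hc : (fun k : {k : Fin t // k ≠ j} => X k.1) = r <;> simp [hc]
  calc ∑ r, blockM A j X ((Equiv.funSplitAt j V).symm (b, r)) * w ((Equiv.funSplitAt j V).symm (b, r))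
      = ∑ r, if (fun k : {k : Fin t // k ≠ j} => X k.1) = r
          then A (X j) b * w ((Equiv.funSplitAt j V).symm (b, r)) else 0 :=
        Finset.sum_congr rfl fun r _ => key r
    _ = A (X j) b * w ((Equiv.funSplitAt j V).symm (b, fun k => X k.1)) := by
        rw [Finset.sum_ite_eq]
        simp

lemma sq_sum_blockM (A : Matrix V V ℝ) (w : (Fin t → V) → ℝ) :
    ∑ X, (blockM A j *ᵥ w) X ^ 2 ≤ specNorm A ^ 2 * ∑ X, w X ^ 2 := by
  set e := Equiv.funSplitAt j V with he
  set u : ({k : Fin t // k ≠ j} → V) → V → ℝ := fun r b => w (e.symm (b, r)) with hu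
  have hform : ∀ X, (blockM A j *ᵥ w) X = (A *ᵥ u (fun k => X k.1)) (X j) := by
    intro X
    rw [blockM_mulVec]
    rfl
  calc ∑ X, (blockM A j *ᵥ w) X ^ 2
      = ∑ X, ((A *ᵥ u (fun k => X k.1)) (X j)) ^ 2 :=
        Finset.sum_congr rfl fun X _ => by rw [hform]
    _ = ∑ p : V × ({k : Fin t // k ≠ j} → V), ((A *ᵥ u p.2) p.1) ^ 2 := by
        rw [← Equiv.sum_comp e.symm (fun X => ((A *ᵥ u (fun k => X k.1)) (X j)) ^ 2)]
        refine Finset.sum_congr rfl fun p _ => ?_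
        have h1 : (fun k : {k : Fin t // k ≠ j} => (e.symm p) k.1) = p.2 := by
          funext k; exact splitAt_symm_ne j p.1 p.2 k
        have h2 : (e.symm p) j = p.1 := splitAt_symm_same j p.1 p.2
        rw [h1, h2]
    _ = ∑ r, ∑ b, ((A *ᵥ u r) b) ^ 2 := by
        rw [Fintype.sum_prod_type, Finset.sum_comm]
    _ ≤ ∑ r, specNorm A ^ 2 * ∑ b, (u r b) ^ 2 :=
        Finset.sum_le_sum fun r _ => sq_mulVec_le A (u r)
    _ = specNorm A ^ 2 * ∑ r, ∑ b, (u r b) ^ 2 := by rw [Finset.mul_sum]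
    _ = specNorm A ^ 2 * ∑ X, w X ^ 2 := by
        congr 1
        rw [← Equiv.sum_comp e.symm (fun X => w X ^ 2), Fintype.sum_prod_type, Finset.sum_comm]
    
lemma specNorm_blockM_le (A : Matrix V V ℝ) : specNorm (blockM A j) ≤ specNorm A :=
  specNorm_le_bound_sq _ _ (specNorm_nonneg A) fun w => sq_sum_blockM j A w

end block

section ray
variable {V : Type*} [Fintype V] [DecidableEq V] {t : ℕ}

lemma sum_mulVec' {ι : Type*} (s : Finset ι) (A : ι → Matrix V V ℝ) (v : V → ℝ) :
    (∑ i ∈ s, A i) *ᵥ v = ∑ i ∈ s, (A i *ᵥ v) := by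
  ext x
  simp only [Matrix.mulVec, dotProduct, Finset.sum_apply, Finset.sum_fn]
  rw [Finset.sum_comm]
  refine Finset.sum_congr rfl fun y _ => ?_
  rw [Matrix.sum_apply, Finset.sum_mul]

lemma dotProduct_sum' {ι : Type*} (s : Finset ι) (u : V → ℝ) (w : ι → (V → ℝ)) :
    u ⬝ᵥ (∑ i ∈ s, w i) = ∑ i ∈ s, u ⬝ᵥ w i := by
  simp only [dotProduct, Finset.sum_apply, Finset.mul_sum]
  exact Finset.sum_comm

lemma sum_prod_sq {ι : Type*} [Fintype ι] [DecidableEq ι] (v : V → ℝ)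
    (hv : ∑ x, v x ^ 2 = 1) :
    ∑ r : ι → V, ∏ k, v (r k) ^ 2 = 1 := by
  rw [← Fintype.prod_sum (f := fun (_ : ι) (x : V) => v x ^ 2)]
  simp [hv]

lemma dot_blockM (j : Fin t) (A : Matrix V V ℝ) (v : V → ℝ) (hv : ∑ x, v x ^ 2 = 1) :
    (fun X : Fin t → V => ∏ i, v (X i)) ⬝ᵥ (blockM A j *ᵥ fun X : Fin t → V => ∏ i, v (X i))
      = v ⬝ᵥ (A *ᵥ v) := by
  set e := Equiv.funSplitAt j V with he
  set w : (Fin t → V) → ℝ := fun X => ∏ i, v (X i) with hwdef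
  set c : ({k : Fin t // k ≠ j} → V) → ℝ := fun r => ∏ k, v (r k) with hc
  set u : ({k : Fin t // k ≠ j} → V) → V → ℝ := fun r b => w (e.symm (b, r)) with hu
  have hw : ∀ b r, w (e.symm (b, r)) = v b * c r := by
    intro b r
    show ∏ i, v (e.symm (b, r) i) = v b * c r
    rw [prod_split j (fun i => v (e.symm (b, r) i)), splitAt_symm_same]
    congr 1
    exact Finset.prod_congr rfl fun k _ => by rw [splitAt_symm_ne]
  have hA : ∀ r b, (A *ᵥ u r) b = c r * (A *ᵥ v) b := by
    intro r b
    simp only [Matrix.mulVec, dotProduct]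
    rw [Finset.mul_sum]
    refine Finset.sum_congr rfl fun b' _ => ?_
    have : u r b' = v b' * c r := hw b' r
    rw [this]; ring
  have hform : ∀ X : Fin t → V, (blockM A j *ᵥ w) X = (A *ᵥ u (fun k => X k.1)) (X j) := by
    intro X
    rw [blockM_mulVec]
    rfl
  have hcsq : ∑ r : {k : Fin t // k ≠ j} → V, c r ^ 2 = 1 := by
    rw [hc]
    have : ∀ r : {k : Fin t // k ≠ j} → V, (∏ k, v (r k)) ^ 2 = ∏ k, v (r k) ^ 2 :=
      fun r => (Finset.prod_pow _ _ _).symm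
    simp only [this]
    exact sum_prod_sq v hv
  calc w ⬝ᵥ (blockM A j *ᵥ w) = ∑ X, w X * (A *ᵥ u (fun k => X k.1)) (X j) := by
        rw [dotProduct]
        exact Finset.sum_congr rfl fun X _ => by rw [hform]
    _ = ∑ p : V × ({k : Fin t // k ≠ j} → V), w (e.symm p) * (A *ᵥ u p.2) p.1 := by
        rw [← Equiv.sum_comp e.symm (fun X => w X * (A *ᵥ u (fun k => X k.1)) (X j))]
        refine Finset.sum_congr rfl fun p _ => ?_
        have h1 : (fun k : {k : Fin t // k ≠ j} => (e.symm p) k.1) = p.2 := by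
          funext k; exact splitAt_symm_ne j p.1 p.2 k
        have h2 : (e.symm p) j = p.1 := splitAt_symm_same j p.1 p.2
        rw [h1, h2]
    _ = ∑ r, ∑ b, (v b * c r) * (c r * (A *ᵥ v) b) := by
        rw [Fintype.sum_prod_type, Finset.sum_comm]
        refine Finset.sum_congr rfl fun r _ => Finset.sum_congr rfl fun b _ => ?_
        rw [hw, hA]
    _ = ∑ r, c r ^ 2 * (v ⬝ᵥ (A *ᵥ v)) := by
        refine Finset.sum_congr rfl fun r _ => ?_
        rw [dotProduct, Finset.mul_sum]
        refine Finset.sum_congr rfl fun b _ => by ring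
    _ = v ⬝ᵥ (A *ᵥ v) := by
        rw [← Finset.sum_mul, hcsq, one_mul]

lemma t_mul_le_specNorm_sum (A : Matrix V V ℝ) (hA : A.IsSymm) [Nonempty V] (t : ℕ) :
    (t : ℝ) * specNorm A ≤ specNorm (∑ j : Fin t, blockM A j) := by
  obtain ⟨v, hv1, hv2⟩ := exists_unit_dot A hA
  set w : (Fin t → V) → ℝ := fun X => ∏ i, v (X i) with hwdef
  have hwsq : ∑ X : Fin t → V, w X ^ 2 = 1 := by
    rw [hwdef]
    have : ∀ X : Fin t → V, (∏ i, v (X i)) ^ 2 = ∏ i, v (X i) ^ 2 :=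
      fun X => (Finset.prod_pow _ _ _).symm
    simp only [this]
    exact sum_prod_sq v hv1
  have hdot : w ⬝ᵥ ((∑ j : Fin t, blockM A j) *ᵥ w) = (t : ℝ) * (v ⬝ᵥ (A *ᵥ v)) := by
    rw [sum_mulVec', dotProduct_sum']
    rw [Finset.sum_congr rfl fun (j : Fin t) _ => dot_blockM j A v hv1]
    simp [Finset.card_univ]
  have habs := abs_dot_mulVec_le (∑ j : Fin t, blockM A j) w w
  rw [hdot, hwsq, Real.sqrt_one, mul_one] at habs
  rw [mul_one] at habs
  calc (t : ℝ) * specNorm A ≤ (t : ℝ) * |v ⬝ᵥ (A *ᵥ v)| := by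
        exact mul_le_mul_of_nonneg_left hv2 (Nat.cast_nonneg t)
    _ = |(t : ℝ) * (v ⬝ᵥ (A *ᵥ v))| := by
        rw [abs_mul, Nat.abs_cast]
    _ ≤ specNorm (∑ j : Fin t, blockM A j) := habs

end ray

section glue
variable {V : Type*} [Fintype V] [DecidableEq V] {t : ℕ}

lemma specNorm_zero : specNorm (0 : Matrix V V ℝ) = 0 := by
  unfold specNorm
  rw [map_zero, norm_zero]

lemma blockM_symm {Γ : Matrix V V ℝ} (hsymm : Γ.IsSymm) (j : Fin t) :
    (blockM Γ j).IsSymm := by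
  rw [Matrix.IsSymm]
  ext X Y
  rw [Matrix.transpose_apply]
  simp only [blockM, Matrix.of_apply]
  congr 1
  · exact hsymm.apply (X j) (Y j)
  · exact Finset.prod_congr rfl fun k _ => if_congr eq_comm rfl rfl

lemma blockM_sum_symm {Γ : Matrix V V ℝ} (hsymm : Γ.IsSymm) :
    (∑ j : Fin t, blockM Γ j).IsSymm := by
  rw [Matrix.IsSymm, Matrix.transpose_sum]
  exact Finset.sum_congr rfl fun j _ => blockM_symm hsymm j

lemma blockM_nonneg {Γ : Matrix V V ℝ} (hnn : ∀ x y, 0 ≤ Γ x y) (j : Fin t)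
    (X Y : Fin t → V) : 0 ≤ blockM Γ j X Y := by
  simp only [blockM, Matrix.of_apply]
  refine mul_nonneg (hnn _ _) (Finset.prod_nonneg fun k _ => ?_)
  split_ifs <;> norm_num

lemma blockM_sum_nonneg {Γ : Matrix V V ℝ} (hnn : ∀ x y, 0 ≤ Γ x y)
    (X Y : Fin t → V) : 0 ≤ (∑ j : Fin t, blockM Γ j) X Y := by
  rw [Matrix.sum_apply]
  exact Finset.sum_nonneg fun j _ => blockM_nonneg hnn j X Y

lemma blockM_sum_zero {σ : Type*} {f : V → σ} {Γ : Matrix V V ℝ}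
    (hzero : ∀ x y, f x = f y → Γ x y = 0) (X Y : Fin t → V)
    (h : ∀ j, f (X j) = f (Y j)) : (∑ j : Fin t, blockM Γ j) X Y = 0 := by
  rw [Matrix.sum_apply]
  refine Finset.sum_eq_zero fun j _ => ?_
  simp only [blockM, Matrix.of_apply]
  rw [hzero _ _ (h j), zero_mul]

lemma blockM_entry_const (A : Matrix V V ℝ) (j0 : Fin t) (a b : V) :
    blockM A j0 (fun _ => a) (Function.update (fun _ => a) j0 b) = A a b := by
  simp only [blockM, Matrix.of_apply]
  rw [Function.update_self]
  have hprod : (∏ k : {k : Fin t // k ≠ j0},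
      (if (fun _ => a) k.1 = Function.update (fun _ => a) j0 b k.1 then (1:ℝ) else 0)) = 1 := by
    refine Finset.prod_eq_one fun k _ => ?_
    rw [Function.update_of_ne k.2]
    exact if_pos rfl
  rw [hprod, mul_one]

lemma blockM_sum_entry {Γ : Matrix V V ℝ} (hdiag : ∀ x, Γ x x = 0) (j0 : Fin t) (a b : V) :
    (∑ j : Fin t, blockM Γ j) (fun _ => a) (Function.update (fun _ => a) j0 b) = Γ a b := by
  rw [Matrix.sum_apply]
  rw [Finset.sum_eq_single j0]
  · exact blockM_entry_const Γ j0 a b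
  · intro j _ hj
    simp only [blockM, Matrix.of_apply]
    rw [Function.update_of_ne hj, hdiag, zero_mul]
  · intro h
    exact absurd (Finset.mem_univ j0) h

lemma hadamard_diff_blockM {n : ℕ} {inp : V → Fin n → Bool} (Γ : Matrix V V ℝ)
    (j : Fin t) (i : Fin n) :
    (∑ j' : Fin t, blockM Γ j') ⊙
        diffMatrix (fun (X : Fin t → V) (q : Fin t × Fin n) => inp (X q.1) q.2) (j, i)
      = blockM (Γ ⊙ diffMatrix inp i) j := by
  ext X Y
  rw [Matrix.hadamard_apply, Matrix.sum_apply, Finset.sum_mul]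
  rw [Finset.sum_eq_single j]
  · simp only [blockM, Matrix.of_apply, diffMatrix, Matrix.hadamard_apply]
    ring
  · intro j' _ hj'
    by_cases hXY : X j = Y j
    · have hd : diffMatrix (fun (X : Fin t → V) (q : Fin t × Fin n) => inp (X q.1) q.2) (j, i) X Y
          = 0 := by
        rw [diffMatrix, Matrix.of_apply]
        exact if_neg (not_not_intro (by rw [hXY]))
      rw [hd, mul_zero]
    · have hb : blockM Γ j' X Y = 0 := by
        simp only [blockM, Matrix.of_apply]
        have hp : (∏ k : {k : Fin t // k ≠ j'}, if X k.1 = Y k.1 then (1:ℝ) else 0) = 0 :=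
          Finset.prod_eq_zero (Finset.mem_univ (⟨j, hj'.symm⟩ : {k : Fin t // k ≠ j'}))
            (if_neg hXY)
        rw [hp, mul_zero]
      rw [hb, zero_mul]
  · intro h
    exact absurd (Finset.mem_univ j) h

end glue

section adv
variable {V ι σ : Type*} [Fintype V] [DecidableEq V] [Fintype ι]

/-- The feasible set in the definition of `ADV`. -/
def advSet (inp : V → ι → Bool) (f : V → σ) : Set ℝ :=
  { r : ℝ | ∃ Γ : Matrix V V ℝ, Γ ≠ 0 ∧ Γ.IsSymm ∧ (∀ x y, 0 ≤ Γ x y) ∧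
    (∀ x y, f x = f y → Γ x y = 0) ∧
    r = specNorm Γ / ⨆ i : ι, specNorm (Γ ⊙ diffMatrix inp i) }

lemma ADV_eq (inp : V → ι → Bool) (f : V → σ) : ADV inp f = sSup (advSet inp f) := rfl

lemma mem_advSet_nonneg {inp : V → ι → Bool} {f : V → σ} {r : ℝ} (hr : r ∈ advSet inp f) :
    0 ≤ r := by
  obtain ⟨Γ, -, -, -, -, hr⟩ := hr
  rw [hr]
  exact div_nonneg (specNorm_nonneg _) (Real.iSup_nonneg fun i => specNorm_nonneg _)

lemma ADV_nonneg (inp : V → ι → Bool) (f : V → σ) : 0 ≤ ADV inp f := by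
  rw [ADV_eq]
  by_cases hne : (advSet inp f).Nonempty
  · by_cases hbdd : BddAbove (advSet inp f)
    · obtain ⟨r, hr⟩ := hne
      exact (mem_advSet_nonneg hr).trans (le_csSup hbdd hr)
    · rw [Real.sSup_of_not_bddAbove hbdd]
  · rw [Set.not_nonempty_iff_eq_empty] at hne
    rw [hne, Real.sSup_empty]

lemma mem_advSet_le_card {inp : V → ι → Bool} {f : V → σ}
    (hgood : ∀ x y, f x ≠ f y → inp x ≠ inp y) {r : ℝ} (hr : r ∈ advSet inp f) :
    r ≤ (Fintype.card ι : ℝ) := by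
  obtain ⟨Γ, hΓ0, hsymm, hnn, hzero, hr⟩ := hr
  obtain ⟨x0, y0, hxy0⟩ : ∃ x y, Γ x y ≠ 0 := by
    by_contra h
    push_neg at h
    exact hΓ0 (by ext x y; exact h x y)
  have hf0 : f x0 ≠ f y0 := fun h => hxy0 (hzero _ _ h)
  obtain ⟨i0, hi0⟩ : ∃ i, inp x0 i ≠ inp y0 i := Function.ne_iff.mp (hgood _ _ hf0)
  haveI : Nonempty ι := ⟨i0⟩
  have hbddR : BddAbove (Set.range fun i => specNorm (Γ ⊙ diffMatrix inp i)) :=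
    Set.Finite.bddAbove (Set.finite_range _)
  set s := ⨆ i : ι, specNorm (Γ ⊙ diffMatrix inp i) with hs
  have hentry : (Γ ⊙ diffMatrix inp i0) x0 y0 = Γ x0 y0 := by
    rw [Matrix.hadamard_apply, diffMatrix, Matrix.of_apply, if_pos hi0, mul_one]
  have hspos : 0 < s := by
    have h1 : |Γ x0 y0| ≤ specNorm (Γ ⊙ diffMatrix inp i0) := by
      have := abs_entry_le_specNorm (Γ ⊙ diffMatrix inp i0) x0 y0
      rwa [hentry] at this
    have h2 : specNorm (Γ ⊙ diffMatrix inp i0) ≤ s := le_ciSup hbddR i0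
    exact lt_of_lt_of_le (lt_of_lt_of_le (abs_pos.mpr hxy0) h1) h2
  have hnum : specNorm Γ ≤ (Fintype.card ι : ℝ) * s := by
    have hent : ∀ x y, |Γ x y| ≤ (∑ i, Γ ⊙ diffMatrix inp i) x y := by
      intro x y
      rw [Matrix.sum_apply]
      by_cases h : Γ x y = 0
      · rw [h, abs_zero]
        refine Finset.sum_nonneg fun i _ => ?_
        rw [Matrix.hadamard_apply]
        refine mul_nonneg (hnn x y) ?_
        rw [diffMatrix, Matrix.of_apply]
        split_ifs <;> norm_num
      · have hfxy : f x ≠ f y := fun hc => h (hzero _ _ hc)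
        obtain ⟨i1, hi1⟩ : ∃ i, inp x i ≠ inp y i := Function.ne_iff.mp (hgood _ _ hfxy)
        rw [abs_of_nonneg (hnn x y)]
        have hterm : (Γ ⊙ diffMatrix inp i1) x y = Γ x y := by
          rw [Matrix.hadamard_apply, diffMatrix, Matrix.of_apply, if_pos hi1, mul_one]
        calc Γ x y = (Γ ⊙ diffMatrix inp i1) x y := hterm.symm
          _ ≤ ∑ i, (Γ ⊙ diffMatrix inp i) x y := by
              refine Finset.single_le_sum (f := fun i => (Γ ⊙ diffMatrix inp i) x y)
                (fun i _ => ?_) (Finset.mem_univ i1)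
              show (0:ℝ) ≤ (Γ ⊙ diffMatrix inp i) x y
              rw [Matrix.hadamard_apply]
              refine mul_nonneg (hnn x y) ?_
              rw [diffMatrix, Matrix.of_apply]
              split_ifs <;> norm_num
    calc specNorm Γ ≤ specNorm (∑ i, Γ ⊙ diffMatrix inp i) := specNorm_mono hent
      _ ≤ ∑ i, specNorm (Γ ⊙ diffMatrix inp i) := specNorm_sum_le _ _
      _ ≤ ∑ _i : ι, s := Finset.sum_le_sum fun i _ => le_ciSup hbddR i
      _ = (Fintype.card ι : ℝ) * s := by
          rw [Finset.sum_const, Finset.card_univ, nsmul_eq_mul]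
  rw [hr, div_le_iff₀ hspos]
  exact hnum

lemma advSet_not_bddAbove {inp : V → ι → Bool} {f : V → σ} {x y a b : V}
    (hfxy : f x ≠ f y) (hxy : inp x = inp y) (hfab : f a ≠ f b) (hab : inp a ≠ inp b) :
    ¬BddAbove (advSet inp f) := by
  obtain ⟨i0, hi0⟩ : ∃ i, inp a i ≠ inp b i := Function.ne_iff.mp hab
  haveI : Nonempty ι := ⟨i0⟩
  rintro ⟨cb, hcb⟩
  set M : ℝ := 2 * |cb| + 2 with hM
  have hMpos : 0 < M := by positivity
  set Γ : Matrix V V ℝ := Matrix.of fun p q =>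
    (if (p = x ∧ q = y) ∨ (p = y ∧ q = x) then M else 0) +
    (if (p = a ∧ q = b) ∨ (p = b ∧ q = a) then (1:ℝ) else 0) with hΓ
  have hPxy : ¬((x = a ∧ y = b) ∨ (x = b ∧ y = a)) := by
    rintro (⟨h1, h2⟩ | ⟨h1, h2⟩) <;> apply hab
    · rw [← h1, ← h2]; exact hxy
    · rw [← h1, ← h2]; exact hxy.symm
  have hPab : ¬((a = x ∧ b = y) ∨ (a = y ∧ b = x)) := by
    rintro (⟨h1, h2⟩ | ⟨h1, h2⟩) <;> apply hab
    · rw [h1, h2]; exact hxy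
    · rw [h1, h2]; exact hxy.symm
  have hΓxy : Γ x y = M := by
    rw [hΓ, Matrix.of_apply, if_pos (Or.inl ⟨rfl, rfl⟩), if_neg hPxy, add_zero]
  have hΓab : Γ a b = 1 := by
    rw [hΓ, Matrix.of_apply, if_neg hPab, if_pos (Or.inl ⟨rfl, rfl⟩), zero_add]
  have hnn : ∀ p q, 0 ≤ Γ p q := by
    intro p q
    rw [hΓ, Matrix.of_apply]
    refine add_nonneg ?_ ?_ <;> split_ifs <;> norm_num
    exact le_of_lt hMpos
  have hzero : ∀ p q, f p = f q → Γ p q = 0 := by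
    intro p q hpq
    rw [hΓ, Matrix.of_apply, if_neg, if_neg, add_zero]
    · rintro (⟨h1, h2⟩ | ⟨h1, h2⟩) <;> subst h1 <;> subst h2
      · exact hfab hpq
      · exact hfab hpq.symm
    · rintro (⟨h1, h2⟩ | ⟨h1, h2⟩) <;> subst h1 <;> subst h2
      · exact hfxy hpq
      · exact hfxy hpq.symm
  have hsymm : Γ.IsSymm := by
    rw [Matrix.IsSymm]
    ext p q
    rw [Matrix.transpose_apply, hΓ, Matrix.of_apply, Matrix.of_apply]
    congr 1
    · refine if_congr ?_ rfl rfl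
      constructor <;> rintro (⟨h1, h2⟩ | ⟨h1, h2⟩) <;> [exact Or.inr ⟨h2, h1⟩;
        exact Or.inl ⟨h2, h1⟩; exact Or.inr ⟨h2, h1⟩; exact Or.inl ⟨h2, h1⟩]
    · refine if_congr ?_ rfl rfl
      constructor <;> rintro (⟨h1, h2⟩ | ⟨h1, h2⟩) <;> [exact Or.inr ⟨h2, h1⟩;
        exact Or.inl ⟨h2, h1⟩; exact Or.inr ⟨h2, h1⟩; exact Or.inl ⟨h2, h1⟩]
  have hΓ0 : Γ ≠ 0 := by
    intro h
    have : Γ x y = 0 := by rw [h]; rfl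
    rw [hΓxy] at this
    exact (ne_of_gt hMpos) this
  set s := ⨆ i : ι, specNorm (Γ ⊙ diffMatrix inp i) with hs
  have hbddR : BddAbove (Set.range fun i => specNorm (Γ ⊙ diffMatrix inp i)) :=
    Set.Finite.bddAbove (Set.finite_range _)
  set E : Matrix V V ℝ := Matrix.of fun p q =>
    (if p = a ∧ q = b then (1:ℝ) else 0) + (if p = b ∧ q = a then (1:ℝ) else 0) with hE
  have hab' : a ≠ b := fun h => hfab (by rw [h])
  have hxney : x ≠ y := fun h => hfxy (by rw [h])
  have hdom : ∀ i p q, |(Γ ⊙ diffMatrix inp i) p q| ≤ E p q := by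
    intro i p q
    have hEnn : 0 ≤ E p q := by
      rw [hE, Matrix.of_apply]
      apply add_nonneg <;> · split_ifs <;> norm_num
    rw [Matrix.hadamard_apply]
    by_cases hP : (p = x ∧ q = y) ∨ (p = y ∧ q = x)
    · have hd : diffMatrix inp i p q = 0 := by
        rw [diffMatrix, Matrix.of_apply]
        rcases hP with ⟨h1, h2⟩ | ⟨h1, h2⟩ <;> subst h1 <;> subst h2
        · exact if_neg (not_not_intro (congrFun hxy _))
        · exact if_neg (not_not_intro (congrFun hxy.symm _))
      rw [hd, mul_zero, abs_zero]
      exact hEnn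
    · have hΓpq : Γ p q = (if (p = a ∧ q = b) ∨ (p = b ∧ q = a) then (1:ℝ) else 0) := by
        rw [hΓ, Matrix.of_apply, if_neg hP, zero_add]
      have hdle : |diffMatrix inp i p q| ≤ 1 := by
        rw [diffMatrix, Matrix.of_apply]; split_ifs <;> norm_num
      rw [abs_mul]
      calc |Γ p q| * |diffMatrix inp i p q| ≤ |Γ p q| * 1 :=
            mul_le_mul_of_nonneg_left hdle (abs_nonneg _)
        _ = |Γ p q| := mul_one _
        _ ≤ E p q := by
            rw [hΓpq, hE, Matrix.of_apply]
            by_cases h1 : p = a ∧ q = b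
            · have h2 : ¬(p = b ∧ q = a) := by
                rintro ⟨h3, h4⟩
                exact hab' (h1.1.symm.trans h3)
              rw [if_pos (Or.inl h1), if_pos h1, if_neg h2]
              norm_num
            · by_cases h2 : p = b ∧ q = a
              · rw [if_pos (Or.inr h2), if_neg h1, if_pos h2]
                norm_num
              · rw [if_neg (by tauto), if_neg h1, if_neg h2]
                norm_num
  have hEfro : specNorm E ≤ 2 := by
    refine (specNorm_le_frobenius E).trans ?_
    have hEsq : ∀ p q, E p q ^ 2 =
        (if p = a ∧ q = b then (1:ℝ) else 0) + (if p = b ∧ q = a then (1:ℝ) else 0) := by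
      intro p q
      rw [hE, Matrix.of_apply]
      split_ifs with h1 h2
      · exact absurd (h1.1.symm.trans h2.1) hab'
      · norm_num
      · norm_num
      · norm_num
    have hsum : ∑ p, ∑ q, E p q ^ 2 = 2 := by
      simp only [hEsq]
      rw [Finset.sum_congr rfl fun p _ => Finset.sum_add_distrib]
      rw [Finset.sum_add_distrib]
      have e1 : ∑ p, ∑ q, (if p = a ∧ q = b then (1:ℝ) else 0) = 1 := by
        simp only [ite_and]
        rw [Finset.sum_eq_single a]
        · rw [Finset.sum_eq_single b]
          · simp
          · intro q _ hq; simp [hq]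
          · intro h; exact absurd (Finset.mem_univ b) h
        · intro p _ hp; simp [hp]
        · intro h; exact absurd (Finset.mem_univ a) h
      have e2 : ∑ p, ∑ q, (if p = b ∧ q = a then (1:ℝ) else 0) = 1 := by
        simp only [ite_and]
        rw [Finset.sum_eq_single b]
        · rw [Finset.sum_eq_single a]
          · simp
          · intro q _ hq; simp [hq]
          · intro h; exact absurd (Finset.mem_univ a) h
        · intro p _ hp; simp [hp]
        · intro h; exact absurd (Finset.mem_univ b) h
      rw [e1, e2]
      norm_num
    rw [hsum]
    nlinarith [Real.sq_sqrt (show (0:ℝ) ≤ 2 by norm_num), Real.sqrt_nonneg 2]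
  have hsle : s ≤ 2 := by
    refine ciSup_le fun i => ?_
    calc specNorm (Γ ⊙ diffMatrix inp i) ≤ specNorm E := specNorm_mono (hdom i)
      _ ≤ 2 := hEfro
  have hspos : 1 ≤ s := by
    have hentry : (Γ ⊙ diffMatrix inp i0) a b = 1 := by
      rw [Matrix.hadamard_apply, hΓab, diffMatrix, Matrix.of_apply, if_pos hi0, one_mul]
    have h1 : (1:ℝ) ≤ specNorm (Γ ⊙ diffMatrix inp i0) := by
      have h2 := abs_entry_le_specNorm (Γ ⊙ diffMatrix inp i0) a b
      rw [hentry, abs_one] at h2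
      exact h2
    exact h1.trans (le_ciSup hbddR i0)
  have hmem : specNorm Γ / s ∈ advSet inp f := ⟨Γ, hΓ0, hsymm, hnn, hzero, rfl⟩
  have hle := hcb hmem
  have hnum : M ≤ specNorm Γ := by
    have := abs_entry_le_specNorm Γ x y
    rw [hΓxy, abs_of_pos hMpos] at this
    exact this
  have hlow : M / 2 ≤ specNorm Γ / s := by
    have h1 : M / 2 ≤ specNorm Γ / 2 := by linarith
    have h2 : specNorm Γ / 2 ≤ specNorm Γ / s := by
      rw [div_le_div_iff₀ (by norm_num) (by linarith)]
      exact mul_le_mul_of_nonneg_left hsle (specNorm_nonneg Γ)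
    linarith
  have : M / 2 ≤ cb := le_trans hlow hle
  rw [hM] at this
  have habs : cb ≤ |cb| := le_abs_self cb
  linarith

end adv

section advaux
variable {V ι σ : Type*} [Fintype V] [DecidableEq V] [Fintype ι]

lemma advSet_pos_aux {inp : V → ι → Bool} {f : V → σ} {Γ : Matrix V V ℝ}
    (hzero : ∀ x y, f x = f y → Γ x y = 0)
    (hpos : 0 < specNorm Γ / ⨆ i : ι, specNorm (Γ ⊙ diffMatrix inp i)) :
    0 < (⨆ i : ι, specNorm (Γ ⊙ diffMatrix inp i)) ∧
      ∃ (i0 : ι) (a b : V), Γ a b ≠ 0 ∧ inp a i0 ≠ inp b i0 ∧ f a ≠ f b := by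
  have hspos : 0 < ⨆ i : ι, specNorm (Γ ⊙ diffMatrix inp i) := by
    rcases div_pos_iff.mp hpos with ⟨-, hs⟩ | ⟨hN, -⟩
    · exact hs
    · exact absurd hN (not_lt.mpr (specNorm_nonneg Γ))
  refine ⟨hspos, ?_⟩
  cases isEmpty_or_nonempty ι with
  | inl h =>
      rw [Real.iSup_of_isEmpty] at hspos
      exact absurd hspos (lt_irrefl 0)
  | inr h =>
      obtain ⟨i0, hi0⟩ : ∃ i : ι, 0 < specNorm (Γ ⊙ diffMatrix inp i) := by
        by_contra hc
        push_neg at hc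
        exact absurd (ciSup_le hc) (not_le.mpr hspos)
      have hne : Γ ⊙ diffMatrix inp i0 ≠ 0 := by
        intro h0
        rw [h0, specNorm_zero] at hi0
        exact lt_irrefl 0 hi0
      obtain ⟨a, b, hab⟩ : ∃ a b, (Γ ⊙ diffMatrix inp i0) a b ≠ 0 := by
        by_contra hc
        push_neg at hc
        exact hne (by ext a b; exact hc a b)
      rw [Matrix.hadamard_apply] at hab
      have hΓab : Γ a b ≠ 0 := fun h => hab (by rw [h, zero_mul])
      have hD : inp a i0 ≠ inp b i0 := by
        intro h
        apply hab
        rw [diffMatrix, Matrix.of_apply, if_neg (not_not_intro h), mul_zero]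
      exact ⟨i0, a, b, hΓab, hD, fun h => hΓab (hzero _ _ h)⟩

end advaux

theorem adv_direct_sum {V σ : Type*} [Fintype V] [DecidableEq V] {n : ℕ}
    (inp : V → Fin n → Bool) (f : V → σ) (t : ℕ) (ht : 1 ≤ t) :
    (t : ℝ) * ADV inp f ≤
      ADV (fun (x : Fin t → V) (q : Fin t × Fin n) => inp (x q.1) q.2)
        (fun (x : Fin t → V) (j : Fin t) => f (x j)) := by
  set inp' : (Fin t → V) → (Fin t × Fin n) → Bool := fun x q => inp (x q.1) q.2 with hinp'
  set f' : (Fin t → V) → (Fin t → σ) := fun x j => f (x j) with hf'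
  by_cases hA : ADV inp f ≤ 0
  · have h1 : (t : ℝ) * ADV inp f ≤ 0 :=
      mul_nonpos_of_nonneg_of_nonpos (Nat.cast_nonneg t) hA
    exact h1.trans (ADV_nonneg _ _)
  · push_neg at hA
    have hSne : (advSet inp f).Nonempty := by
      by_contra h
      rw [Set.not_nonempty_iff_eq_empty] at h
      rw [ADV_eq, h, Real.sSup_empty] at hA
      exact lt_irrefl 0 hA
    have hSbdd : BddAbove (advSet inp f) := by
      by_contra h
      rw [ADV_eq, Real.sSup_of_not_bddAbove h] at hA
      exact lt_irrefl 0 hA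
    obtain ⟨r0, hr0mem, hr0pos⟩ :=
      exists_lt_of_lt_csSup hSne (show (0:ℝ) < sSup (advSet inp f) by rw [← ADV_eq]; exact hA)
    obtain ⟨Γ0, h01, h02, h03, h04, h05⟩ := hr0mem
    rw [h05] at hr0pos
    obtain ⟨-, i00, a0, b0, hΓ0ab, hD0, hf0⟩ := advSet_pos_aux h04 hr0pos
    have hab0 : inp a0 ≠ inp b0 := fun h => hD0 (congrFun h i00)
    have hgood : ∀ x y, f x ≠ f y → inp x ≠ inp y := by
      intro x y hfne hc
      exact advSet_not_bddAbove hfne hc hf0 hab0 hSbdd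
    have hgood' : ∀ X Y : Fin t → V, f' X ≠ f' Y → inp' X ≠ inp' Y := by
      intro X Y hfne hc
      apply hfne
      funext j
      by_contra hne
      exact hgood _ _ hne (funext fun i => congrFun hc (j, i))
    have hS'bdd : BddAbove (advSet inp' f') :=
      ⟨(Fintype.card (Fin t × Fin n) : ℝ), fun r hr => mem_advSet_le_card hgood' hr⟩
    have hnnS' : 0 ≤ sSup (advSet inp' f') := by
      rw [← ADV_eq]
      exact ADV_nonneg _ _
    have htpos : (0:ℝ) < t := by
      have : 0 < t := lt_of_lt_of_le Nat.zero_lt_one ht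
      exact_mod_cast this
    rw [ADV_eq, ADV_eq, mul_comm, ← le_div_iff₀ htpos]
    refine Real.sSup_le ?_ (div_nonneg hnnS' htpos.le)
    intro r hr
    rw [le_div_iff₀ htpos]
    rcases le_or_gt r 0 with hr0 | hrpos
    · nlinarith
    · obtain ⟨Γ, hΓ0, hsymm, hnn, hzero, hreq⟩ := hr
      have hrpos' := hrpos
      rw [hreq] at hrpos'
      obtain ⟨hspos, i0, a, b, hΓab, hDab, hfab⟩ := advSet_pos_aux hzero hrpos'
      haveI : Nonempty V := ⟨a⟩
      set j0 : Fin t := ⟨0, ht⟩ with hj0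
      set X0 : Fin t → V := fun _ => a with hX0
      set Y0 : Fin t → V := Function.update X0 j0 b with hY0
      set Γt : Matrix (Fin t → V) (Fin t → V) ℝ := ∑ j : Fin t, blockM Γ j with hΓt
      have hdiag : ∀ x, Γ x x = 0 := fun x => hzero x x rfl
      have hentry : Γt X0 Y0 = Γ a b := blockM_sum_entry hdiag j0 a b
      have hΓt0 : Γt ≠ 0 := by
        intro h
        apply hΓab
        rw [← hentry, h]
        rfl
      have hsymmt : Γt.IsSymm := blockM_sum_symm hsymm
      have hnnt : ∀ X Y, 0 ≤ Γt X Y := blockM_sum_nonneg hnn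
      have hzerot : ∀ X Y, f' X = f' Y → Γt X Y = 0 := fun X Y h =>
        blockM_sum_zero hzero X Y (fun j => congrFun h j)
      have hbddR : BddAbove (Set.range fun i : Fin n => specNorm (Γ ⊙ diffMatrix inp i)) :=
        Set.Finite.bddAbove (Set.finite_range _)
      have hbddR' : BddAbove
          (Set.range fun p : Fin t × Fin n => specNorm (Γt ⊙ diffMatrix inp' p)) :=
        Set.Finite.bddAbove (Set.finite_range _)
      set s := ⨆ i : Fin n, specNorm (Γ ⊙ diffMatrix inp i) with hs
      set s' := ⨆ p : Fin t × Fin n, specNorm (Γt ⊙ diffMatrix inp' p) with hs'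
      have hdiffeq : ∀ (j : Fin t) (i : Fin n),
          Γt ⊙ diffMatrix inp' (j, i) = blockM (Γ ⊙ diffMatrix inp i) j := by
        intro j i
        rw [hΓt, hinp']
        exact hadamard_diff_blockM Γ j i
      haveI : Nonempty (Fin t × Fin n) := ⟨(j0, i0)⟩
      have hs'le : s' ≤ s := by
        rw [hs']
        refine ciSup_le fun p => ?_
        obtain ⟨j, i⟩ := p
        rw [hdiffeq j i]
        exact (specNorm_blockM_le j (Γ ⊙ diffMatrix inp i)).trans (le_ciSup hbddR i)
      have hs'pos : 0 < s' := by
        have he : (Γt ⊙ diffMatrix inp' (j0, i0)) X0 Y0 = (Γ ⊙ diffMatrix inp i0) a b := by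
          rw [hdiffeq j0 i0, hX0, hY0, hX0]
          exact blockM_entry_const (Γ ⊙ diffMatrix inp i0) j0 a b
        have habs := abs_entry_le_specNorm (Γt ⊙ diffMatrix inp' (j0, i0)) X0 Y0
        rw [he] at habs
        have hpos2 : 0 < |(Γ ⊙ diffMatrix inp i0) a b| := by
          refine abs_pos.mpr ?_
          rw [Matrix.hadamard_apply, diffMatrix, Matrix.of_apply, if_pos hDab, mul_one]
          exact hΓab
        exact lt_of_lt_of_le (lt_of_lt_of_le hpos2 habs) (le_ciSup hbddR' (j0, i0))
      have hmem : specNorm Γt / s' ∈ advSet inp' f' :=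
        ⟨Γt, hΓt0, hsymmt, hnnt, hzerot, rfl⟩
      have hnum : (t : ℝ) * specNorm Γ ≤ specNorm Γt := by
        rw [hΓt]
        exact t_mul_le_specNorm_sum Γ hsymm t
      have hrt : r * t ≤ specNorm Γt / s' := by
        rw [hreq]
        calc specNorm Γ / s * t = ((t : ℝ) * specNorm Γ) / s := by ring
          _ ≤ specNorm Γt / s' := div_le_div₀ (specNorm_nonneg Γt) hnum hs'pos hs'le
      exact hrt.trans (le_csSup hS'bdd hmem)
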